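/- Let C be an n×n positive stable complex matrix, μ = min{Re λ : λ eigenvalue of C}, and let P be a positive definite Hermitian matrix with C*P + PC ≥ 2μP. Let λmin and λmax be the smallest and largest eigenvalues of P and κ(P) = λmax/λmin its condition number. Then every solution of f' = −Cf satisfies ‖f(t)‖₂² ≤ κ(P) e^{−2μt} ‖f(0)‖₂² for all t ≥ 0. -/

import Mathlib

open Matrix Complex Finset
open scoped ComplexOrder

lemma aux_norm_sum_eq (n : ℕ) (v : Fin n → ℂ) :
    (star v ⬝ᵥ v).re = ∑ i, ‖v i‖ ^ 2 := by
  simp [dotProduct, Complex.re_sum, Pi.star_apply, ← Complex.normSq_eq_norm_sq,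
    Complex.normSq_apply]

lemma aux_quad_eq (n : ℕ) (P : Matrix (Fin n) (Fin n) ℂ) (hH : P.IsHermitian)
    (v : Fin n → ℂ) :
    (star v ⬝ᵥ P *ᵥ v).re
      = ∑ j, hH.eigenvalues j * ‖(star (hH.eigenvectorUnitary : Matrix (Fin n) (Fin n) ℂ) *ᵥ v) j‖ ^ 2 := by
  set U := (hH.eigenvectorUnitary : Matrix (Fin n) (Fin n) ℂ) with hU
  set w := star U *ᵥ v with hw
  have hsw : star w = star v ᵥ* U := by
    rw [hw, star_mulVec]
    simp [← Matrix.star_eq_conjTranspose]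
  have h1 : star v ⬝ᵥ P *ᵥ v = star w ⬝ᵥ (diagonal (Complex.ofReal ∘ hH.eigenvalues)) *ᵥ w := by
    conv_lhs => rw [hH.spectral_theorem, Unitary.conjStarAlgAut_apply]
    rw [hsw, hw, ← hU, ← mulVec_mulVec, ← mulVec_mulVec, dotProduct_mulVec]
    rfl
  rw [h1]
  simp only [dotProduct, mulVec_diagonal, Complex.re_sum, Pi.star_apply,
    ← Complex.normSq_eq_norm_sq, Complex.normSq_apply, Function.comp_apply]
  apply Finset.sum_congr rfl
  intro x _
  simp [Complex.mul_re, Complex.sq_norm, Complex.normSq_apply]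
  ring

lemma aux_norm_pres (n : ℕ) (P : Matrix (Fin n) (Fin n) ℂ) (hH : P.IsHermitian)
    (v : Fin n → ℂ) :
    ∑ j, ‖(star (hH.eigenvectorUnitary : Matrix (Fin n) (Fin n) ℂ) *ᵥ v) j‖ ^ 2
      = ∑ i, ‖v i‖ ^ 2 := by
  set U := (hH.eigenvectorUnitary : Matrix (Fin n) (Fin n) ℂ) with hU
  set w := star U *ᵥ v with hw
  have hsw : star w = star v ᵥ* U := by
    rw [hw, star_mulVec]; simp [← Matrix.star_eq_conjTranspose]
  have hUU : U * star U = 1 := (Matrix.mem_unitaryGroup_iff).mp hH.eigenvectorUnitary.2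
  have h1 : star w ⬝ᵥ w = star v ⬝ᵥ v := by
    rw [hsw, hw, ← dotProduct_mulVec, mulVec_mulVec, hUU, one_mulVec]
  rw [← aux_norm_sum_eq, ← aux_norm_sum_eq, h1]

theorem stmt3 (n : ℕ) (C : Matrix (Fin n) (Fin n) ℂ) (μ : ℝ)
    (hstable : ∀ lam : ℂ, (∃ v : Fin n → ℂ, v ≠ 0 ∧ C.mulVec v = lam • v) → 0 < lam.re)
    (hμ1 : ∀ lam : ℂ, (∃ v : Fin n → ℂ, v ≠ 0 ∧ C.mulVec v = lam • v) → μ ≤ lam.re)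
    (hμ2 : ∃ lam : ℂ, (∃ v : Fin n → ℂ, v ≠ 0 ∧ C.mulVec v = lam • v) ∧ lam.re = μ)
    (P : Matrix (Fin n) (Fin n) ℂ) (hP : P.PosDef)
    (hineq : (Cᴴ * P + P * C - ((2 * μ : ℝ) : ℂ) • P).PosSemidef)
    (lmin lmax : ℝ)
    (hmin : IsLeast {l : ℝ | ∃ v : Fin n → ℂ, v ≠ 0 ∧ P.mulVec v = (l : ℂ) • v} lmin)
    (hmax : IsGreatest {l : ℝ | ∃ v : Fin n → ℂ, v ≠ 0 ∧ P.mulVec v = (l : ℂ) • v} lmax)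
    (f : ℝ → Fin n → ℂ) (hf : ∀ t : ℝ, HasDerivAt f (-(C.mulVec (f t))) t) :
    ∀ t : ℝ, 0 ≤ t →
      ∑ i, ‖f t i‖ ^ 2 ≤ (lmax / lmin) * Real.exp (-(2 * μ) * t) * ∑ i, ‖f 0 i‖ ^ 2 := by
  have hH : P.IsHermitian := hP.1
  -- eigenvalues of P lie between lmin and lmax
  have heig_mem : ∀ j, hH.eigenvalues j ∈
      {l : ℝ | ∃ v : Fin n → ℂ, v ≠ 0 ∧ P.mulVec v = (l : ℂ) • v} := by
    intro j
    refine ⟨⇑(hH.eigenvectorBasis j), ?_, ?_⟩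
    · intro h
      exact hH.eigenvectorBasis.orthonormal.ne_zero j (by ext i; exact congrFun h i)
    · rw [hH.mulVec_eigenvectorBasis j]
      funext i
      simp [Complex.real_smul]
  have h1 : ∀ j, lmin ≤ hH.eigenvalues j := fun j => hmin.2 (heig_mem j)
  have h2 : ∀ j, hH.eigenvalues j ≤ lmax := fun j => hmax.2 (heig_mem j)
  -- quadratic form bounds
  have hlb : ∀ v : Fin n → ℂ, lmin * ∑ i, ‖v i‖ ^ 2 ≤ (star v ⬝ᵥ P *ᵥ v).re := by
    intro v
    rw [aux_quad_eq n P hH v, ← aux_norm_pres n P hH v, Finset.mul_sum]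
    exact Finset.sum_le_sum fun j _ =>
      mul_le_mul_of_nonneg_right (h1 j) (by positivity)
  have hub : ∀ v : Fin n → ℂ, (star v ⬝ᵥ P *ᵥ v).re ≤ lmax * ∑ i, ‖v i‖ ^ 2 := by
    intro v
    rw [aux_quad_eq n P hH v, ← aux_norm_pres n P hH v, Finset.mul_sum]
    exact Finset.sum_le_sum fun j _ =>
      mul_le_mul_of_nonneg_right (h2 j) (by positivity)
  -- lmin > 0
  have hlmin : 0 < lmin := by
    obtain ⟨v, hv0, hvP⟩ := hmin.1
    have hpos := hP.dotProduct_mulVec_pos hv0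
    have hre : 0 < (star v ⬝ᵥ P *ᵥ v).re := by
      have := (Complex.lt_def.mp hpos).1
      simpa using this
    rw [hvP] at hre
    have : star v ⬝ᵥ (lmin : ℂ) • v = (lmin : ℂ) * (star v ⬝ᵥ v) := dotProduct_smul _ _ _
    rw [this] at hre
    have hS : (star v ⬝ᵥ v).re = ∑ i, ‖v i‖ ^ 2 := aux_norm_sum_eq n v
    have him : (star v ⬝ᵥ v).im = 0 := by
      simp [dotProduct, Complex.im_sum, Pi.star_apply, Complex.mul_im, mul_comm]
    have hre2 : 0 < lmin * ∑ i, ‖v i‖ ^ 2 := by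
      rw [Complex.mul_re, him] at hre
      simpa [hS] using hre
    have hSnn : 0 ≤ ∑ i, (‖v i‖ : ℝ) ^ 2 := by positivity
    nlinarith
  -- the Lyapunov function and its derivative
  set V : ℝ → ℝ := fun t => (star (f t) ⬝ᵥ P *ᵥ f t).re with hV
  have hVd : ∀ t, HasDerivAt V (-(star (f t) ⬝ᵥ ((Cᴴ * P + P * C) *ᵥ f t)).re) t := by
    intro t
    have hcoord : ∀ i, HasDerivAt (fun s => f s i) ((-(C *ᵥ f t)) i) t :=
      fun i => hasDerivAt_pi.mp (hf t) i
    have hPf : ∀ i, HasDerivAt (fun s => (P *ᵥ f s) i) ((P *ᵥ (-(C *ᵥ f t))) i) t := by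
      intro i
      simp only [mulVec, dotProduct]
      exact HasDerivAt.fun_sum (fun j _ => (hcoord j).const_mul (P i j))
    have hmain : HasDerivAt (fun s => star (f s) ⬝ᵥ P *ᵥ f s)
        (star (-(C *ᵥ f t)) ⬝ᵥ P *ᵥ f t + star (f t) ⬝ᵥ P *ᵥ (-(C *ᵥ f t))) t := by
      simp only [dotProduct, Pi.star_apply, ← Finset.sum_add_distrib]
      exact HasDerivAt.fun_sum (fun i _ => ((hcoord i).star.mul (hPf i)))
    have halg : star (-(C *ᵥ f t)) ⬝ᵥ P *ᵥ f t + star (f t) ⬝ᵥ P *ᵥ (-(C *ᵥ f t))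
        = -(star (f t) ⬝ᵥ ((Cᴴ * P + P * C) *ᵥ f t)) := by
      rw [star_neg, neg_dotProduct, mulVec_neg, dotProduct_neg, add_mulVec,
        dotProduct_add, neg_add, star_mulVec]
      simp only [dotProduct_mulVec, vecMul_vecMul]
    rw [halg] at hmain
    have := Complex.reCLM.hasFDerivAt.comp_hasDerivAt t hmain
    simp at this; exact this
  -- key differential inequality
  have hkey : ∀ t, -(star (f t) ⬝ᵥ ((Cᴴ * P + P * C) *ᵥ f t)).re ≤ -(2 * μ) * V t := by
    intro t
    have h0 := hineq.dotProduct_mulVec_nonneg (f t)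
    have hre : 0 ≤ (star (f t) ⬝ᵥ ((Cᴴ * P + P * C - ((2 * μ : ℝ) : ℂ) • P) *ᵥ f t)).re :=
      (Complex.le_def.mp h0).1
    rw [sub_mulVec, dotProduct_sub, Complex.sub_re, smul_mulVec,
      dotProduct_smul] at hre
    have : (((2 * μ : ℝ) : ℂ) • (star (f t) ⬝ᵥ P *ᵥ f t)).re = (2 * μ) * V t := by
      simp [hV, Complex.smul_re]
    rw [this] at hre
    linarith
  -- gronwall: V t * exp(2μt) antitone
  set g : ℝ → ℝ := fun t => V t * Real.exp (2 * μ * t) with hg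
  have hgd : ∀ t, HasDerivAt g
      ((-(star (f t) ⬝ᵥ ((Cᴴ * P + P * C) *ᵥ f t)).re) * Real.exp (2 * μ * t)
        + V t * (Real.exp (2 * μ * t) * (2 * μ))) t := by
    intro t
    have h := (hVd t).mul (((hasDerivAt_id t).const_mul (2 * μ)).exp)
    simp at h; exact h.congr_deriv (by ring)
  have hganti : Antitone g := by
    apply antitone_of_deriv_nonpos
    · exact fun t => (hgd t).differentiableAt
    · intro t
      rw [(hgd t).deriv]
      have := hkey t
      have he : 0 < Real.exp (2 * μ * t) := Real.exp_pos _
      nlinarith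
  intro t ht
  have hle : V t * Real.exp (2 * μ * t) ≤ V 0 * Real.exp (2 * μ * 0) := hganti ht
  rw [mul_zero, Real.exp_zero, mul_one] at hle
  have hVt : V t ≤ V 0 * Real.exp (-(2 * μ) * t) := by
    have he : 0 < Real.exp (2 * μ * t) := Real.exp_pos _
    rw [neg_mul, Real.exp_neg, ← div_eq_mul_inv]
    exact (le_div_iff₀ he).2 hle
  have hL := hlb (f t)
  have hU := hub (f 0)
  have hVtt : lmin * ∑ i, ‖f t i‖ ^ 2 ≤ (lmax * ∑ i, ‖f 0 i‖ ^ 2) * Real.exp (-(2 * μ) * t) := by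
    have he : 0 < Real.exp (-(2 * μ) * t) := Real.exp_pos _
    calc lmin * ∑ i, ‖f t i‖ ^ 2 ≤ V t := hL
    _ ≤ V 0 * Real.exp (-(2 * μ) * t) := hVt
    _ ≤ (lmax * ∑ i, ‖f 0 i‖ ^ 2) * Real.exp (-(2 * μ) * t) :=
        mul_le_mul_of_nonneg_right hU he.le
  rw [div_mul_eq_mul_div, div_mul_eq_mul_div, le_div_iff₀ hlmin]
  nlinarith [hVtt]
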